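/- Let θ ∈ ℤ_p be neither zero nor a negative rational integer, and let θ' ∈ ℚ ∩ ℤ_p be the unique element such that pθ'−θ is an integer in [0, p−1]. Let m and s be positive integers. Then there exists u ∈ 1 + [p^{s+1}]_q·R such that, in Q, C_θ(mp^{s+1})/φ(C_{θ'}(mp^s)) = u · C_1(mp^{s+1})/φ(C_1(mp^s)). -/

import Mathlib

/- Setting (following Dwork-type q-congruences / q-hypergeometric papers):
`p` is an odd prime, `R = ℤ_p[[q−1]]` is implemented as `PowerSeries ℤ_[p]`, the power-series
variable `PowerSeries.X` standing for `q − 1`. -/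

noncomputable section
open PowerSeries
namespace QDwork

variable (p : ℕ) [Fact p.Prime]

/-- `R = ℤ_p[[q−1]]`. -/
abbrev R : Type := PowerSeries ℤ_[p]

/-- `q = 1 + (q−1) ∈ R`. -/
def qq : R p := 1 + PowerSeries.X

/-- `q^a = Σ_{i≥0} binom(a,i)(q−1)^i ∈ R` for `a ∈ ℤ_p`, using the p-adically interpolated
binomial coefficients `Ring.choose` (`ℤ_p` is a binomial ring). -/
def qpow (a : ℤ_[p]) : R p := PowerSeries.mk fun i => Ring.choose a i

/-- The q-number `[a]_q = (q^a−1)/(q−1) = Σ_{i≥1} binom(a,i)(q−1)^{i−1} ∈ R` for `a ∈ ℤ_p`. -/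
def qnum (a : ℤ_[p]) : R p := PowerSeries.mk fun i => Ring.choose a (i + 1)

/-- The q-number `[n]_q = 1 + q + ⋯ + q^{n−1} ∈ R` of a natural number `n`. -/
def qnat (n : ℕ) : R p := ∑ i ∈ Finset.range n, qq p ^ i

/-- The Frobenius endomorphism `φ` of `R = ℤ_p[[q−1]]`: the ring endomorphism fixing `ℤ_p`
with `φ(q) = q^p`, i.e. the substitution `f(q−1) ↦ f(q^p−1)` (legitimate since `q^p−1` has
zero constant term), described here through its coefficients. -/
def phiR (f : R p) : R p :=
  PowerSeries.mk fun n => ∑ i ∈ Finset.range (n + 1),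
    PowerSeries.coeff i f * PowerSeries.coeff n ((qq p ^ p - 1) ^ i)

/-- `Q = Frac(R)`. -/
abbrev Q : Type := FractionRing (R p)

/-- The canonical injection `R → Q`. -/
def ι : R p →+* Q p := algebraMap (R p) (Q p)

/-- `q ∈ Q`. -/
def qQ : Q p := ι p (qq p)

/-- `C_θ(n) = ∏_{ν=0}^{n−1} [θ+ν]_q ∈ R`. -/
def Cq (θ : ℤ_[p]) (n : ℕ) : R p := ∏ ν ∈ Finset.range n, qnum p (θ + (ν : ℤ_[p]))

-- chunk 1
@[simp] lemma coeff_qpow (a : ℤ_[p]) (n : ℕ) :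
    PowerSeries.coeff n (qpow p a) = Ring.choose a n := coeff_mk _ _

@[simp] lemma coeff_qnum (a : ℤ_[p]) (n : ℕ) :
    PowerSeries.coeff n (qnum p a) = Ring.choose a (n + 1) := coeff_mk _ _

lemma qpow_zero : qpow p 0 = 1 := by
  ext n
  simp [Ring.choose_zero_ite, PowerSeries.coeff_one]

lemma qpow_add (a b : ℤ_[p]) : qpow p (a + b) = qpow p a * qpow p b := by
  ext n
  rw [PowerSeries.coeff_mul, coeff_qpow, Ring.add_choose_eq _ (Commute.all a b)]
  simp

lemma qq_sub_one : qq p - 1 = PowerSeries.X := by simp [qq]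

lemma qpow_one : qpow p 1 = qq p := by
  ext n
  have : (1 : ℤ_[p]) = ((1 : ℕ) : ℤ_[p]) := by norm_num
  rw [coeff_qpow, this, Ring.choose_natCast]
  rcases n with _ | _ | n <;> simp [qq, Nat.choose_eq_zero_of_lt, PowerSeries.coeff_X]

lemma qpow_natCast (n : ℕ) : qpow p (n : ℤ_[p]) = qq p ^ n := by
  induction n with
  | zero => simpa using qpow_zero p
  | succ n ih =>
    rw [Nat.cast_succ, qpow_add, ih, qpow_one, pow_succ]

lemma qnum_mul_X (a : ℤ_[p]) : qnum p a * PowerSeries.X = qpow p a - 1 := by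
  ext n
  rcases n with _ | n
  · rw [PowerSeries.coeff_zero_mul_X, map_sub, PowerSeries.coeff_zero_eq_constantCoeff, map_one]
    simp [qpow, PowerSeries.constantCoeff_mk, Ring.choose_zero_right]
  · simp [PowerSeries.coeff_succ_mul_X, PowerSeries.coeff_one]

lemma qnat_mul_X (k : ℕ) : qnat p k * PowerSeries.X = qq p ^ k - 1 := by
  rw [← qq_sub_one p]
  exact geom_sum_mul _ _

lemma qnat_eq_qnum (k : ℕ) : qnat p k = qnum p (k : ℤ_[p]) := by
  apply mul_right_cancel₀ (PowerSeries.X_ne_zero :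
    (PowerSeries.X : R p) ≠ 0)
  rw [qnat_mul_X, qnum_mul_X, qpow_natCast]

lemma qnum_eq_zero_iff (a : ℤ_[p]) : qnum p a = 0 ↔ a = 0 := by
  constructor
  · intro h
    have := congrArg (PowerSeries.coeff 0) h
    simpa [Ring.choose_one_right] using this
  · rintro rfl
    ext n
    simp [Ring.choose_zero_pos]

lemma constantCoeff_qnum (a : ℤ_[p]) : PowerSeries.constantCoeff (qnum p a) = a := by
  rw [← PowerSeries.coeff_zero_eq_constantCoeff_apply]
  simp [Ring.choose_one_right]

-- chunk 2 : the substitution q ↦ q^k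
def Y (k : ℕ) : R p := qq p ^ k - 1

lemma Y_eq (k : ℕ) : Y p k = qnat p k * PowerSeries.X := (qnat_mul_X p k).symm

lemma coeff_Y_pow_eq_zero {k n i : ℕ} (h : n < i) :
    PowerSeries.coeff n (Y p k ^ i) = 0 := by
  rw [Y_eq, mul_pow, PowerSeries.coeff_mul_X_pow', if_neg (by omega)]

/-- unbundled substitution `f(q-1) ↦ f(q^k-1)` -/
def PhiFun (k : ℕ) (f : R p) : R p :=
  PowerSeries.mk fun n => ∑ i ∈ Finset.range (n + 1),
    PowerSeries.coeff i f * PowerSeries.coeff n (Y p k ^ i)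

lemma coeff_PhiFun_eval {k n N : ℕ} (hn : n < N) (f : R p) :
    PowerSeries.coeff n (PhiFun p k f) =
      PowerSeries.coeff n
        ((PowerSeries.trunc N f).eval₂ ((PowerSeries.C (R := ℤ_[p]))) (Y p k)) := by
  rw [PowerSeries.eval₂_trunc_eq_sum_range, map_sum, PhiFun, PowerSeries.coeff_mk]
  rw [Finset.sum_subset (Finset.range_subset_range.2 hn)]
  · exact Finset.sum_congr rfl fun i _ => by rw [PowerSeries.coeff_C_mul]
  · intro i hi hni
    simp only [Finset.mem_range] at hi hni
    rw [coeff_Y_pow_eq_zero p (by omega), mul_zero]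

lemma coeff_eval₂_Y_congr {k n : ℕ} {P Q : Polynomial ℤ_[p]}
    (h : ∀ i, i ≤ n → P.coeff i = Q.coeff i) :
    PowerSeries.coeff n (P.eval₂ ((PowerSeries.C (R := ℤ_[p]))) (Y p k)) =
      PowerSeries.coeff n (Q.eval₂ ((PowerSeries.C (R := ℤ_[p]))) (Y p k)) := by
  set B := max P.natDegree Q.natDegree + 1 with hB
  rw [Polynomial.eval₂_eq_sum_range' _ (lt_of_le_of_lt (le_max_left _ _) (Nat.lt_succ_self _)) _,
    Polynomial.eval₂_eq_sum_range' _ (lt_of_le_of_lt (le_max_right _ _) (Nat.lt_succ_self _)) _,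
    map_sum, map_sum]
  refine Finset.sum_congr rfl fun i _ => ?_
  rw [PowerSeries.coeff_C_mul, PowerSeries.coeff_C_mul]
  rcases le_or_gt i n with hi | hi
  · rw [h i hi]
  · rw [coeff_Y_pow_eq_zero p hi, mul_zero, mul_zero]

lemma PhiFun_mul (k : ℕ) (f g : R p) :
    PhiFun p k (f * g) = PhiFun p k f * PhiFun p k g := by
  ext n
  rw [coeff_PhiFun_eval p (Nat.lt_succ_self n)]
  have h1 : ∀ i, i ≤ n →
      (PowerSeries.trunc (n+1) (f * g)).coeff i =
      ((PowerSeries.trunc (n+1) f) * (PowerSeries.trunc (n+1) g)).coeff i := by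
    intro i hi
    have := PowerSeries.coeff_mul_eq_coeff_trunc_mul_trunc (n := n+1) f g (by omega : i < n+1)
    rw [PowerSeries.coeff_trunc, if_pos (by omega), this, ← Polynomial.coe_mul, ← Polynomial.coeff_coe]
  rw [coeff_eval₂_Y_congr p h1, Polynomial.eval₂_mul, PowerSeries.coeff_mul,
    PowerSeries.coeff_mul]
  refine Finset.sum_congr rfl fun x hx => ?_
  rw [Finset.HasAntidiagonal.mem_antidiagonal] at hx
  rw [← coeff_PhiFun_eval p (by omega : x.1 < n+1), ← coeff_PhiFun_eval p (by omega : x.2 < n+1)]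

lemma PhiFun_one (k : ℕ) : PhiFun p k 1 = 1 := by
  ext n
  rw [PhiFun, PowerSeries.coeff_mk]
  rw [Finset.sum_eq_single 0]
  · simp
  · intro i hi hne
    rw [PowerSeries.coeff_one, if_neg hne, zero_mul]
  · intro h
    simp at h

/-- bundled substitution as a ring hom -/
def Phi (k : ℕ) : R p →+* R p where
  toFun := PhiFun p k
  map_one' := PhiFun_one p k
  map_mul' := PhiFun_mul p k
  map_zero' := by ext n; simp [PhiFun]
  map_add' := fun f g => by
    ext n
    simp [PhiFun, Finset.sum_add_distrib, add_mul]

lemma phiR_eq (f : R p) : phiR p f = Phi p p f := rfl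

lemma Phi_X (k : ℕ) : Phi p k PowerSeries.X = Y p k := by
  ext n
  show PowerSeries.coeff n (PhiFun p k PowerSeries.X) = _
  rw [PhiFun, PowerSeries.coeff_mk]
  rw [Finset.sum_eq_single 1]
  · simp
  · intro i hi hne
    rw [PowerSeries.coeff_X, if_neg hne, zero_mul]
  · intro h
    simp only [Finset.mem_range, not_lt] at h
    rw [coeff_Y_pow_eq_zero p (by omega), mul_zero]
-- chunk 3
lemma Phi_qq (k : ℕ) : Phi p k (qq p) = qq p ^ k := by
  have : (qq p : R p) = 1 + PowerSeries.X := rfl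
  rw [this, map_add, map_one, Phi_X, Y, this]
  ring

lemma eval_descPoch (i : ℕ) (x : ℤ_[p]) :
    ((descPochhammer ℤ i).map (Int.castRingHom ℤ_[p])).eval x
      = (i.factorial : ℤ_[p]) * Ring.choose x i := by
  rw [Polynomial.eval_map, ← algebraMap_int_eq, ← Polynomial.aeval_def, Polynomial.aeval_eq_smeval,
    Ring.descPochhammer_eq_factorial_smul_choose, nsmul_eq_mul]

lemma choose_interp (k n : ℕ) (c : ℕ → ℤ_[p])
    (hnat : ∀ j : ℕ, Ring.choose (((k * j : ℕ)) : ℤ_[p]) n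
      = ∑ i ∈ Finset.range (n+1), c i * Ring.choose ((j : ℕ) : ℤ_[p]) i)
    (a : ℤ_[p]) :
    Ring.choose ((k : ℤ_[p]) * a) n = ∑ i ∈ Finset.range (n+1), c i * Ring.choose a i := by
  set G : ℕ → Polynomial ℤ_[p] :=
    fun i => (descPochhammer ℤ i).map (Int.castRingHom ℤ_[p]) with hG
  set PL : Polynomial ℤ_[p] := (G n).comp (Polynomial.C (k : ℤ_[p]) * Polynomial.X) with hPL
  set PR : Polynomial ℤ_[p] :=
    ∑ i ∈ Finset.range (n+1),
      Polynomial.C (c i * ((n.factorial / i.factorial : ℕ) : ℤ_[p])) * G i with hPR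
  have hevalL : ∀ x : ℤ_[p], PL.eval x = (n.factorial : ℤ_[p]) * Ring.choose ((k:ℤ_[p]) * x) n := by
    intro x
    rw [hPL, Polynomial.eval_comp, Polynomial.eval_mul, Polynomial.eval_C, Polynomial.eval_X,
      eval_descPoch]
  have hevalR : ∀ x : ℤ_[p], PR.eval x
      = (n.factorial : ℤ_[p]) * ∑ i ∈ Finset.range (n+1), c i * Ring.choose x i := by
    intro x
    rw [hPR, Polynomial.eval_finset_sum, Finset.mul_sum]
    refine Finset.sum_congr rfl fun i hi => ?_
    rw [Finset.mem_range] at hi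
    rw [Polynomial.eval_mul, Polynomial.eval_C, eval_descPoch]
    have hdvd : i.factorial ∣ n.factorial := Nat.factorial_dvd_factorial (by omega)
    have : ((n.factorial / i.factorial : ℕ) : ℤ_[p]) * (i.factorial : ℤ_[p])
        = (n.factorial : ℤ_[p]) := by
      rw [← Nat.cast_mul, Nat.div_mul_cancel hdvd]
    calc c i * ((n.factorial / i.factorial : ℕ) : ℤ_[p]) * ((i.factorial : ℤ_[p]) * Ring.choose x i)
        = (((n.factorial / i.factorial : ℕ) : ℤ_[p]) * (i.factorial : ℤ_[p]))
            * (c i * Ring.choose x i) := by ring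
      _ = (n.factorial : ℤ_[p]) * (c i * Ring.choose x i) := by rw [this]
  have hPLR : PL = PR := by
    apply Polynomial.eq_of_infinite_eval_eq
    apply Set.Infinite.mono (s := Set.range ((↑) : ℕ → ℤ_[p]))
    · rintro _ ⟨j, rfl⟩
      simp only [Set.mem_setOf_eq]
      rw [hevalL, hevalR]
      have : (k : ℤ_[p]) * (j : ℤ_[p]) = ((k * j : ℕ) : ℤ_[p]) := by push_cast; ring
      rw [this, hnat j]
    · exact Set.infinite_range_of_injective Nat.cast_injective
  have := congrArg (Polynomial.eval a) hPLR
  rw [hevalL, hevalR] at this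
  exact mul_left_cancel₀ (Nat.cast_ne_zero.2 n.factorial_ne_zero) this

lemma coeff_Phi (k n : ℕ) (f : R p) :
    PowerSeries.coeff n (Phi p k f) = ∑ i ∈ Finset.range (n + 1),
      PowerSeries.coeff i f * PowerSeries.coeff n (Y p k ^ i) := by
  show PowerSeries.coeff n (PhiFun p k f) = _
  exact PowerSeries.coeff_mk _ _

lemma Phi_qpow (k : ℕ) (a : ℤ_[p]) : Phi p k (qpow p a) = qpow p ((k : ℤ_[p]) * a) := by
  ext n
  rw [coeff_Phi, coeff_qpow]
  have hnat : ∀ j : ℕ, Ring.choose (((k * j : ℕ)) : ℤ_[p]) n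
      = ∑ i ∈ Finset.range (n+1),
          PowerSeries.coeff n (Y p k ^ i) * Ring.choose ((j : ℕ) : ℤ_[p]) i := by
    intro j
    have h1 : Phi p k (qpow p ((j : ℕ) : ℤ_[p])) = qpow p (((k * j : ℕ)) : ℤ_[p]) := by
      rw [qpow_natCast, map_pow, Phi_qq, qpow_natCast, ← pow_mul]
    have := congrArg (PowerSeries.coeff n) h1
    rw [coeff_Phi, coeff_qpow] at this
    rw [← this]
    exact Finset.sum_congr rfl fun i _ => by rw [coeff_qpow, mul_comm]
  rw [choose_interp p k n _ hnat a]
  exact Finset.sum_congr rfl fun i _ => by rw [coeff_qpow, mul_comm]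

lemma Phi_qnum (k : ℕ) (a : ℤ_[p]) :
    qnat p k * Phi p k (qnum p a) = qnum p ((k : ℤ_[p]) * a) := by
  apply mul_right_cancel₀ (PowerSeries.X_ne_zero : (PowerSeries.X : R p) ≠ 0)
  have : qnat p k * Phi p k (qnum p a) * PowerSeries.X
      = Phi p k (qnum p a) * (qnat p k * PowerSeries.X) := by ring
  rw [this, qnat_mul_X, ← Y, ← Phi_X, ← map_mul, qnum_mul_X, map_sub, map_one, Phi_qpow,
    qnum_mul_X]
-- chunk 4
lemma qnum_sub (a b : ℤ_[p]) : qnum p a - qnum p b = qpow p b * qnum p (a - b) := by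
  apply mul_right_cancel₀ (PowerSeries.X_ne_zero : (PowerSeries.X : R p) ≠ 0)
  have h1 : qpow p b * qpow p (a - b) = qpow p a := by
    rw [← qpow_add]; congr 1; ring
  rw [sub_mul, qnum_mul_X, qnum_mul_X, mul_assoc, qnum_mul_X, mul_sub, mul_one, h1]
  ring

lemma qnum_congr (M : ℕ) {a b : ℤ_[p]} (h : ∃ c, a - b = (M : ℤ_[p]) * c) :
    qnum p a - qnum p b ∈ Ideal.span {qnat p M} := by
  obtain ⟨c, hc⟩ := h
  rw [qnum_sub, hc, ← Phi_qnum p M c, Ideal.mem_span_singleton]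
  exact ⟨qpow p b * Phi p M (qnum p c), by ring⟩

lemma padic_natCast_dvd (n : ℕ) : (p : ℤ_[p]) ∣ (n : ℤ_[p]) ↔ p ∣ n := by
  rw [← PadicInt.norm_lt_one_iff_dvd]
  rw [show ((n : ℕ) : ℤ_[p]) = ((n : ℤ) : ℤ_[p]) from by push_cast; rfl]
  rw [PadicInt.norm_int_lt_one_iff_dvd]
  exact Int.natCast_dvd_natCast

lemma isUnit_natCast_iff (n : ℕ) : IsUnit ((n : ℤ_[p])) ↔ ¬ p ∣ n := by
  rw [PadicInt.isUnit_iff, ← padic_natCast_dvd, ← PadicInt.norm_lt_one_iff_dvd]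
  constructor
  · intro h hlt
    rw [h] at hlt
    exact lt_irrefl 1 hlt
  · intro h
    exact le_antisymm (PadicInt.norm_le_one _) (not_lt.1 h)

lemma isUnit_qnum {a : ℤ_[p]} (h : IsUnit a) : IsUnit (qnum p a) := by
  rw [PowerSeries.isUnit_iff_constantCoeff, constantCoeff_qnum]
  exact h

lemma Phi_qnum_ne_zero (k : ℕ) (hk : 0 < k) {a : ℤ_[p]} (ha : a ≠ 0) :
    Phi p k (qnum p a) ≠ 0 := by
  intro h
  have h2 := Phi_qnum p k a
  rw [h, mul_zero] at h2
  have h3 := (qnum_eq_zero_iff p _).1 h2.symm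
  rcases mul_eq_zero.1 h3 with h4 | h4
  · exact Nat.cast_ne_zero.2 (by omega) h4
  · exact ha h4
-- chunk 5 : the factorization of Cq over one p-step
lemma Cq_factor (θ θ' : ℤ_[p]) (a₀ : ℕ) (ha : a₀ < p)
    (hrel : θ + (a₀ : ℤ_[p]) = (p : ℤ_[p]) * θ') (n : ℕ) :
    Cq p θ (n * p) =
      (∏ ν ∈ (Finset.range (n * p)).filter (fun ν => ν % p ≠ a₀), qnum p (θ + (ν : ℤ_[p])))
        * (qnat p p ^ n * Phi p p (Cq p θ' n)) := by
  have hp0 : 0 < p := by omega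
  have hP : qnat p p ^ n * Phi p p (Cq p θ' n)
      = ∏ μ ∈ Finset.range n, qnum p (θ + ((a₀ + p * μ : ℕ) : ℤ_[p])) := by
    rw [Cq, map_prod, ← Finset.card_range n, ← Finset.prod_const (qnat p p),
      Finset.card_range, ← Finset.prod_mul_distrib]
    refine Finset.prod_congr rfl fun μ _ => ?_
    have harg : (p : ℤ_[p]) * (θ' + (μ : ℤ_[p])) = θ + ((a₀ + p * μ : ℕ) : ℤ_[p]) := by
      push_cast
      linear_combination -hrel
    rw [Phi_qnum, harg]
  rw [Cq, ← Finset.prod_filter_mul_prod_filter_not (Finset.range (n * p))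
    (fun ν => ν % p ≠ a₀), hP]
  congr 1
  refine Finset.prod_bij' (i := fun ν _ => ν / p) (j := fun μ _ => a₀ + p * μ)
    ?_ ?_ ?_ ?_ ?_
  · intro ν hν
    simp only [Finset.mem_filter, Finset.mem_range, not_not] at hν
    rw [Finset.mem_range]
    exact (Nat.div_lt_iff_lt_mul hp0).2 (by omega)
  · intro μ hμ
    rw [Finset.mem_range] at hμ
    simp only [Finset.mem_filter, Finset.mem_range, not_not]
    constructor
    · have h1 : p * (μ + 1) ≤ p * n := Nat.mul_le_mul_left p (by omega)
      have h2 : p * (μ + 1) = p * μ + p := by ring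
      have h3 : p * n = n * p := Nat.mul_comm p n
      omega
    · rw [Nat.add_mul_mod_self_left, Nat.mod_eq_of_lt ha]
  · intro ν hν
    simp only [Finset.mem_filter, Finset.mem_range, not_not] at hν
    show a₀ + p * (ν / p) = ν
    have := Nat.mod_add_div ν p
    omega
  · intro μ hμ
    show (a₀ + p * μ) / p = μ
    rw [Nat.add_mul_div_left _ _ hp0, Nat.div_eq_of_lt ha, zero_add]
  · intro ν hν
    simp only [Finset.mem_filter, Finset.mem_range, not_not] at hν
    have hν' : a₀ + p * (ν / p) = ν := by
      have := Nat.mod_add_div ν p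
      omega
    show qnum p (θ + (ν : ℤ_[p])) = qnum p (θ + ((a₀ + p * (ν / p) : ℕ) : ℤ_[p]))
    rw [hν']

-- chunk 6 : congruence of filtered products
lemma prod_filter_congr (θ θ' : ℤ_[p]) (a₀ : ℕ) (ha : a₀ < p)
    (hrel : θ + (a₀ : ℤ_[p]) = (p : ℤ_[p]) * θ') (m s : ℕ) (hm : 0 < m) :
    (∏ ν ∈ (Finset.range (m * p ^ (s+1))).filter (fun ν => ν % p ≠ a₀),
        qnum p (θ + (ν : ℤ_[p])))
      - (∏ ν ∈ (Finset.range (m * p ^ (s+1))).filter (fun ν => ν % p ≠ (p - 1)),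
        qnum p (1 + (ν : ℤ_[p])))
      ∈ Ideal.span {qnat p (p ^ (s+1))} := by
  have hp0 : 0 < p := by have := (Fact.out : p.Prime).two_le; omega
  set N := m * p ^ (s+1) with hN
  have hN0 : 0 < N := by positivity
  have hpdvdN : p ∣ N := ⟨m * p ^ s, by ring⟩
  set t := (θ - 1).appr (s+1) with ht
  obtain ⟨c1, hc1⟩ : ∃ c, θ - 1 - (t : ℤ_[p]) = ((p ^ (s+1) : ℕ) : ℤ_[p]) * c := by
    have h := PadicInt.appr_spec (s+1) (θ - 1)
    rw [Ideal.mem_span_singleton] at h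
    obtain ⟨c, hc⟩ := h
    exact ⟨c, by push_cast; exact_mod_cast hc⟩
  set σ : ℕ → ℕ := fun ν => (ν + t) % N with hσ
  set t' : ℕ := N - t % N with ht'
  set τ : ℕ → ℕ := fun ν => (ν + t') % N with hτ
  have htt' : ∃ w, t + t' = N * w := by
    have hd := Nat.div_add_mod t N
    have hlt : t % N < N := Nat.mod_lt _ hN0
    refine ⟨t / N + 1, ?_⟩
    have hh : N * (t / N + 1) = N * (t / N) + N := by ring
    omega
  have ht't : ∃ w, t' + t = N * w := by
    obtain ⟨w, hw⟩ := htt'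
    exact ⟨w, by omega⟩
  have hinv : ∀ u v : ℕ, (∃ w, u + v = N * w) → ∀ x, x < N → ((x + u) % N + v) % N = x := by
    rintro u v ⟨w, hw⟩ x hx
    rw [Nat.mod_add_mod]
    have hxw : x + u + v = x + N * w := by omega
    rw [hxw, Nat.add_mul_mod_self_left, Nat.mod_eq_of_lt hx]
  have hpt : p ∣ t + a₀ + 1 := by
    rw [← padic_natCast_dvd]
    refine ⟨θ' - (p : ℤ_[p]) ^ s * c1, ?_⟩
    push_cast
    push_cast at hc1
    linear_combination hrel - hc1
  have hmodp : ∀ x : ℕ, (x + t) % p = p - 1 ↔ x % p = a₀ := by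
    intro x
    obtain ⟨w, hw⟩ := hpt
    have h1 : (x + t + (a₀ + 1)) % p = x % p := by
      have hxx : x + t + (a₀ + 1) = x + p * w := by omega
      rw [hxx, Nat.add_mul_mod_self_left]
    have hA : (x + t) % p < p := Nat.mod_lt _ hp0
    have hB : x % p < p := Nat.mod_lt _ hp0
    have h3 : x % p = ((x + t) % p + (a₀ + 1)) % p := by
      rw [Nat.mod_add_mod, ← h1]
    constructor
    · intro hA1
      rw [hA1] at h3
      have hpp : p - 1 + (a₀ + 1) = a₀ + p := by omega
      rw [hpp, Nat.add_mod_right, Nat.mod_eq_of_lt ha] at h3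
      exact h3
    · intro hB1
      by_contra hne
      rcases lt_or_ge ((x + t) % p + (a₀ + 1)) p with hlt | hge
      · rw [Nat.mod_eq_of_lt hlt] at h3
        omega
      · have h4 : (x + t) % p + (a₀ + 1) - p < p := by omega
        have h5 : ((x + t) % p + (a₀ + 1)) % p = (x + t) % p + (a₀ + 1) - p := by
          rw [Nat.mod_eq_sub_mod hge, Nat.mod_eq_of_lt h4]
        omega
  have hterm : ∀ ν, ν < N → (θ + (ν : ℤ_[p])) - (1 + ((σ ν : ℕ) : ℤ_[p]))
      = ((p ^ (s+1) : ℕ) : ℤ_[p]) * (c1 + (m : ℤ_[p]) * (((ν + t) / N : ℕ) : ℤ_[p])) := by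
    intro ν hν
    have hσν : σ ν = (ν + t) % N := rfl
    have hd : N * ((ν + t) / N) + σ ν = ν + t := by
      rw [hσν]
      have := Nat.div_add_mod (ν + t) N
      omega
    have hd' : ((N : ℕ) : ℤ_[p]) * (((ν + t) / N : ℕ) : ℤ_[p]) + ((σ ν : ℕ) : ℤ_[p])
        = (ν : ℤ_[p]) + (t : ℤ_[p]) := by exact_mod_cast congrArg (Nat.cast : ℕ → ℤ_[p]) hd
    have hNc : ((N : ℕ) : ℤ_[p]) = (m : ℤ_[p]) * ((p : ℤ_[p])) ^ (s+1) := by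
      rw [hN]; push_cast; ring
    rw [hNc] at hd'
    push_cast at hc1 ⊢
    linear_combination hc1 - hd'
  rw [← Ideal.Quotient.eq]
  rw [map_prod, map_prod]
  refine Finset.prod_bij' (i := fun ν _ => σ ν) (j := fun ν _ => τ ν) ?_ ?_ ?_ ?_ ?_
  · intro ν hν
    simp only [Finset.mem_filter, Finset.mem_range] at hν ⊢
    refine ⟨Nat.mod_lt _ hN0, ?_⟩
    have hmm : σ ν % p = (ν + t) % p := Nat.mod_mod_of_dvd _ hpdvdN
    rw [hmm]
    intro hcon
    exact hν.2 ((hmodp ν).1 hcon)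
  · intro ν' hν'
    simp only [Finset.mem_filter, Finset.mem_range] at hν' ⊢
    refine ⟨Nat.mod_lt _ hN0, ?_⟩
    intro hcon
    have hστ : σ (τ ν') = ν' := hinv t' t ht't ν' hν'.1
    have h6 : (τ ν' + t) % p = p - 1 := (hmodp (τ ν')).2 hcon
    have h7 : σ (τ ν') % p = (τ ν' + t) % p := Nat.mod_mod_of_dvd _ hpdvdN
    rw [hστ] at h7
    exact hν'.2 (h7.trans h6)
  · intro ν hν
    simp only [Finset.mem_filter, Finset.mem_range] at hν
    exact hinv t t' htt' ν hν.1
  · intro ν' hν'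
    simp only [Finset.mem_filter, Finset.mem_range] at hν'
    exact hinv t' t ht't ν' hν'.1
  · intro ν hν
    simp only [Finset.mem_filter, Finset.mem_range] at hν
    refine (Ideal.Quotient.eq).2 ?_
    exact qnum_congr p _ ⟨_, hterm ν hν.1⟩

set_option maxHeartbeats 2000000 in
/-- Dwork's Lemma 1, congruence (1,2), q-analogue: for `θ` neither zero nor a negative
integer, `θ'` with `pθ'−θ = a₀ ∈ [0,p−1] ∩ ℤ`, and `m, s > 0`, there is
`u ∈ 1 + [p^{s+1}]_q·R` with `C_θ(mp^{s+1})/φ(C_{θ'}(mp^s)) = u·C_1(mp^{s+1})/φ(C_1(mp^s))`. -/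
theorem dwork_congruence_1_2 (hp : p ≠ 2) (θ θ' : ℤ_[p])
    (hθ : ∀ n : ℕ, θ + (n : ℤ_[p]) ≠ 0)
    (a₀ : ℕ) (ha₀ : a₀ ≤ p - 1) (hθ' : (p : ℤ_[p]) * θ' - θ = (a₀ : ℤ_[p]))
    (m s : ℕ) (hm : 0 < m) (hs : 0 < s) :
    ∃ u r : R p, u = 1 + qnat p (p ^ (s + 1)) * r ∧
      ι p (Cq p θ (m * p ^ (s + 1))) / ι p (phiR p (Cq p θ' (m * p ^ s))) =
        ι p u * ι p (Cq p 1 (m * p ^ (s + 1))) / ι p (phiR p (Cq p 1 (m * p ^ s))) := by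
  have hp2 : 2 ≤ p := (Fact.out : p.Prime).two_le
  have hp0 : 0 < p := by omega
  have haa : a₀ < p := by omega
  set n' := m * p ^ s with hn'
  have hNn : m * p ^ (s + 1) = n' * p := by rw [hn']; ring
  have hrelθ : θ + (a₀ : ℤ_[p]) = (p : ℤ_[p]) * θ' := by linear_combination -hθ'
  have hrel1 : (1 : ℤ_[p]) + ((p - 1 : ℕ) : ℤ_[p]) = (p : ℤ_[p]) * 1 := by
    rw [Nat.cast_sub (by omega : 1 ≤ p)]
    push_cast
    ring
  have hfθ := Cq_factor p θ θ' a₀ haa hrelθ n'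
  have hf1 := Cq_factor p 1 1 (p - 1) (by omega) hrel1 n'
  have hcong := prod_filter_congr p θ θ' a₀ haa hrelθ m s hm
  rw [hNn] at hcong
  set Pθ := ∏ ν ∈ (Finset.range (n' * p)).filter (fun ν => ν % p ≠ a₀),
    qnum p (θ + (ν : ℤ_[p])) with hPθdef
  set P1 := ∏ ν ∈ (Finset.range (n' * p)).filter (fun ν => ν % p ≠ (p - 1)),
    qnum p (1 + (ν : ℤ_[p])) with hP1def
  have hU : IsUnit P1 := by
    rw [hP1def]
    apply Finset.prod_induction _ IsUnit (fun a b ha hb => ha.mul hb) isUnit_one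
    intro ν hν
    simp only [Finset.mem_filter, Finset.mem_range] at hν
    apply isUnit_qnum
    have hcast : (1 : ℤ_[p]) + (ν : ℤ_[p]) = ((ν + 1 : ℕ) : ℤ_[p]) := by push_cast; ring
    rw [hcast, isUnit_natCast_iff]
    rintro ⟨w, hw⟩
    apply hν.2
    rcases w with _ | w
    · omega
    · have hν2 : ν = p - 1 + p * w := by
        have hpw : p * (w + 1) = p * w + p := by ring
        omega
      rw [hν2, Nat.add_mul_mod_self_left, Nat.mod_eq_of_lt (by omega)]
  obtain ⟨h, hh⟩ : ∃ h, Pθ - P1 = qnat p (p ^ (s + 1)) * h := by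
    rw [Ideal.mem_span_singleton] at hcong
    exact hcong
  obtain ⟨v, hv⟩ := hU
  have hD1 : Phi p p (Cq p θ' n') ≠ 0 := by
    rw [Cq, map_prod, Finset.prod_ne_zero_iff]
    intro μ hμ
    apply Phi_qnum_ne_zero p p hp0
    intro h0
    apply hθ (a₀ + p * μ)
    push_cast
    linear_combination hrelθ + (p : ℤ_[p]) * h0
  have hD2 : Phi p p (Cq p 1 n') ≠ 0 := by
    rw [Cq, map_prod, Finset.prod_ne_zero_iff]
    intro μ hμ
    apply Phi_qnum_ne_zero p p hp0
    intro h0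
    have hc0 : ((μ + 1 : ℕ) : ℤ_[p]) = 0 := by push_cast; linear_combination h0
    exact Nat.cast_ne_zero.2 (Nat.succ_ne_zero μ) hc0
  refine ⟨1 + qnat p (p ^ (s + 1)) * (h * (↑v⁻¹ : R p)), h * (↑v⁻¹ : R p), rfl, ?_⟩
  have hvv : (↑v⁻¹ : R p) * P1 = 1 := by rw [← hv]; exact Units.inv_mul v
  have hkey : (1 + qnat p (p ^ (s + 1)) * (h * ↑v⁻¹)) * P1 = Pθ := by
    calc (1 + qnat p (p ^ (s + 1)) * (h * ↑v⁻¹)) * P1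
        = P1 + qnat p (p ^ (s + 1)) * h * ((↑v⁻¹ : R p) * P1) := by ring
      _ = P1 + (Pθ - P1) := by rw [hvv, mul_one, ← hh]
      _ = Pθ := by ring
  have hinj := IsFractionRing.injective (R p) (Q p)
  have hι1 : ι p (Phi p p (Cq p θ' n')) ≠ 0 := fun hc =>
    hD1 ((map_eq_zero_iff _ hinj).1 hc)
  have hι2 : ι p (Phi p p (Cq p 1 n')) ≠ 0 := fun hc =>
    hD2 ((map_eq_zero_iff _ hinj).1 hc)
  have hA : ι p Pθ = ι p (1 + qnat p (p ^ (s + 1)) * (h * ↑v⁻¹)) * ι p P1 := by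
    rw [← map_mul, hkey]
  rw [hNn, hfθ, hf1, phiR_eq, phiR_eq]
  have lhs : ι p (Pθ * (qnat p p ^ n' * Phi p p (Cq p θ' n'))) / ι p (Phi p p (Cq p θ' n'))
      = ι p Pθ * ι p (qnat p p ^ n') := by
    rw [map_mul, map_mul, ← mul_assoc, mul_div_assoc, div_self hι1, mul_one]
  have rhs : ι p (1 + qnat p (p ^ (s + 1)) * (h * ↑v⁻¹))
        * ι p (P1 * (qnat p p ^ n' * Phi p p (Cq p 1 n'))) / ι p (Phi p p (Cq p 1 n'))
      = ι p (1 + qnat p (p ^ (s + 1)) * (h * ↑v⁻¹)) * (ι p P1 * ι p (qnat p p ^ n')) := by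
    rw [map_mul, map_mul, ← mul_assoc, ← mul_assoc, mul_div_assoc, div_self hι2, mul_one]
    ring
  rw [lhs, rhs, hA]
  ring

end QDwork
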